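/- arXiv:1811.00636 — 5 statements merged into one kernel-verified Lean document; each statement's English description precedes it below -/
import Mathlib

section
/- Let 0 < ε < 1/2, σ ≥ 0, and α > 0 with (1−2ε)α > 1. Let D and W be Borel probability measures on ℝ^d with finite second moments, means μ_D and μ_W, and suppose that for every unit vector u one has E_{X∼D}[⟨X−μ_D,u⟩²] ≤ σ² and E_{X∼W}[⟨X−μ_W,u⟩²] ≤ σ². Let Δ = μ_D − μ_W and μ_F = (1−ε)μ_D + εμ_W. If u is a unit vector with |⟨u,Δ⟩| ≥ α·σ/√ε, then, setting t = ε|⟨Δ,u⟩| + σ/√ε, one has Pr_{X∼D}[|⟨X−μ_F,u⟩| > t] ≤ ε and Pr_{X∼W}[|⟨X−μ_F,u⟩| < t] ≤ ε/((1−2ε)α − 1)². -/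
open MeasureTheory RealInnerProductSpace

lemma cheb_aux {X : Type*} [MeasurableSpace X] (μ : Measure X) [IsProbabilityMeasure μ]
    {f : X → ℝ} (hf : MemLp f 2 μ) {s a : ℝ} (ha : 0 < a)
    (hint : ∫ x, f x ^ 2 ∂μ ≤ s ^ 2) :
    μ {x | a ≤ |f x|} ≤ ENNReal.ofReal (s ^ 2 / a ^ 2) := by
  have hsub : {x | a ≤ |f x|} ⊆ {x | a ^ 2 ≤ f x ^ 2} := by
    intro x hx
    have : a ^ 2 ≤ |f x| ^ 2 := pow_le_pow_left₀ ha.le hx 2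
    simpa [sq_abs] using this
  have hmark := mul_meas_ge_le_integral_of_nonneg
    (ae_of_all μ fun x => sq_nonneg (f x)) hf.integrable_sq (a ^ 2)
  have hfin : μ {x | a ≤ |f x|} ≠ ⊤ := measure_ne_top _ _
  have hle : (μ {x | a ≤ |f x|}).toReal ≤ s ^ 2 / a ^ 2 := by
    have h1 : (μ {x | a ≤ |f x|}).toReal ≤ (μ {x | a ^ 2 ≤ f x ^ 2}).toReal :=
      ENNReal.toReal_mono (measure_ne_top _ _) (measure_mono hsub)
    have ha2 : 0 < a ^ 2 := by positivity
    rw [le_div_iff₀ ha2]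
    nlinarith [hmark, show μ.real {x | a ^ 2 ≤ f x ^ 2} = (μ {x | a ^ 2 ≤ f x ^ 2}).toReal from rfl]
  calc μ {x | a ≤ |f x|} = ENNReal.ofReal (μ {x | a ≤ |f x|}).toReal :=
        (ENNReal.ofReal_toReal hfin).symm
    _ ≤ ENNReal.ofReal (s ^ 2 / a ^ 2) := ENNReal.ofReal_le_ofReal hle

lemma ae_zero_aux {X : Type*} [MeasurableSpace X] (μ : Measure X) [IsProbabilityMeasure μ]
    {f : X → ℝ} (hf : MemLp f 2 μ) (hint : ∫ x, f x ^ 2 ∂μ ≤ 0) :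
    μ {x | f x ≠ 0} = 0 := by
  have h0 : ∫ x, f x ^ 2 ∂μ = 0 :=
    le_antisymm hint (integral_nonneg fun x => sq_nonneg _)
  have := (integral_eq_zero_iff_of_nonneg (fun x => sq_nonneg (f x)) hf.integrable_sq).mp h0
  have h : ∀ᵐ x ∂μ, f x = 0 := by
    filter_upwards [this] with x hx
    exact pow_eq_zero_iff (by norm_num) |>.mp hx
  exact h

set_option maxHeartbeats 1000000 in
/-- **Lemma 2.** Any unit vector `u` sufficiently correlated with the mean shift
`Δ = μD − μW` separates the clean population `D` from the poisoned population `W`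
after centering at the mixture mean `μF`, at the threshold `t = ε|⟨Δ,u⟩| + σ/√ε`. -/
theorem correlation_implies_separation {d : ℕ} (ε σ α : ℝ)
    (hε : 0 < ε) (hε2 : ε < 1 / 2) (hσ : 0 ≤ σ) (hα : 0 < α)
    (hα2 : (1 - 2 * ε) * α > 1)
    (D W : Measure (EuclideanSpace ℝ (Fin d)))
    [IsProbabilityMeasure D] [IsProbabilityMeasure W]
    (hD2 : MemLp (id : EuclideanSpace ℝ (Fin d) → EuclideanSpace ℝ (Fin d)) 2 D)
    (hW2 : MemLp (id : EuclideanSpace ℝ (Fin d) → EuclideanSpace ℝ (Fin d)) 2 W)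
    (μD μW : EuclideanSpace ℝ (Fin d))
    (hμD : μD = (∫ x, x ∂D)) (hμW : μW = (∫ x, x ∂W))
    (hDcov : ∀ u : EuclideanSpace ℝ (Fin d), ‖u‖ = 1 →
      ∫ x, ⟪x - μD, u⟫ ^ 2 ∂D ≤ σ ^ 2)
    (hWcov : ∀ u : EuclideanSpace ℝ (Fin d), ‖u‖ = 1 →
      ∫ x, ⟪x - μW, u⟫ ^ 2 ∂W ≤ σ ^ 2)
    (Δ μF : EuclideanSpace ℝ (Fin d))
    (hΔ : Δ = μD - μW) (hμF : μF = (1 - ε) • μD + ε • μW)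
    (u : EuclideanSpace ℝ (Fin d)) (hu : ‖u‖ = 1)
    (hcorr : |⟪u, Δ⟫| ≥ α * σ / Real.sqrt ε)
    (t : ℝ) (ht : t = ε * |⟪Δ, u⟫| + σ / Real.sqrt ε) :
    D {x | |⟪x - μF, u⟫| > t} ≤ ENNReal.ofReal ε ∧
    W {x | |⟪x - μF, u⟫| < t} ≤ ENNReal.ofReal (ε / ((1 - 2 * ε) * α - 1) ^ 2) := by
  set β : ℝ := ⟪Δ, u⟫ with hβ
  have hse : Real.sqrt ε > 0 := Real.sqrt_pos.mpr hε
  have hse2 : Real.sqrt ε ^ 2 = ε := Real.sq_sqrt hε.le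
  have hcorr' : |β| ≥ α * σ / Real.sqrt ε := by
    rwa [hβ, real_inner_comm]
  -- pointwise identities
  have hidD : ∀ x : EuclideanSpace ℝ (Fin d), ⟪x - μF, u⟫ = ⟪x - μD, u⟫ + ε * β := by
    intro x
    rw [hβ, hΔ, hμF]
    simp only [inner_sub_left, inner_add_left, real_inner_smul_left]
    ring
  have hidW : ∀ x : EuclideanSpace ℝ (Fin d), ⟪x - μF, u⟫ = ⟪x - μW, u⟫ - (1 - ε) * β := by
    intro x
    rw [hβ, hΔ, hμF]
    simp only [inner_sub_left, inner_add_left, real_inner_smul_left]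
    ring
  -- MemLp of the projections
  have hfD : MemLp (fun x : EuclideanSpace ℝ (Fin d) => ⟪x - μD, u⟫) 2 D := by
    have : MemLp (fun x : EuclideanSpace ℝ (Fin d) => x - μD) 2 D :=
      hD2.sub (memLp_const μD)
    exact this.inner_const u
  have hfW : MemLp (fun x : EuclideanSpace ℝ (Fin d) => ⟪x - μW, u⟫) 2 W := by
    have : MemLp (fun x : EuclideanSpace ℝ (Fin d) => x - μW) 2 W :=
      hW2.sub (memLp_const μW)
    exact this.inner_const u
  constructor
  · -- clean population
    rcases eq_or_lt_of_le hσ with hσ0 | hσpos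
    · -- σ = 0
      have hz := ae_zero_aux D hfD (by simpa [← hσ0] using hDcov u hu)
      refine le_trans (le_trans (measure_mono ?_) (le_of_eq hz)) zero_le
      intro x hx
      simp only [Set.mem_setOf_eq] at hx ⊢
      intro hfx
      rw [hidD x, hfx, zero_add, ht, ← hσ0, abs_mul, abs_of_pos hε] at hx
      simp at hx
    · -- σ > 0
      have ha : (0:ℝ) < σ / Real.sqrt ε := by positivity
      have hsub : {x : EuclideanSpace ℝ (Fin d) | |⟪x - μF, u⟫| > t}
          ⊆ {x | σ / Real.sqrt ε ≤ |⟪x - μD, u⟫|} := by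
        intro x hx
        simp only [Set.mem_setOf_eq] at hx ⊢
        have h1 : |⟪x - μF, u⟫| ≤ |⟪x - μD, u⟫| + ε * |β| := by
          rw [hidD x]
          calc |⟪x - μD, u⟫ + ε * β| ≤ |⟪x - μD, u⟫| + |ε * β| := abs_add_le _ _
            _ = |⟪x - μD, u⟫| + ε * |β| := by rw [abs_mul, abs_of_pos hε]
        rw [ht] at hx
        linarith
      have := cheb_aux D hfD ha (hDcov u hu)
      refine le_trans (measure_mono hsub) (le_trans this (le_of_eq ?_))
      congr 1
      rw [div_pow, hse2]
      have hσ2 : σ ^ 2 ≠ 0 := by positivity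
      field_simp
  · -- poisoned population
    have hc : (0:ℝ) < (1 - 2 * ε) * α - 1 := by linarith
    have h2ε : (0:ℝ) < 1 - 2 * ε := by linarith
    rcases eq_or_lt_of_le hσ with hσ0 | hσpos
    · -- σ = 0
      have hz := ae_zero_aux W hfW (by simpa [← hσ0] using hWcov u hu)
      refine le_trans (le_trans (measure_mono ?_) (le_of_eq hz)) zero_le
      intro x hx
      simp only [Set.mem_setOf_eq] at hx ⊢
      intro hfx
      rw [hidW x, hfx, zero_sub, abs_neg, ht, ← hσ0, abs_mul] at hx
      have h1 : |1 - ε| = 1 - ε := abs_of_pos (by linarith)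
      rw [h1] at hx
      simp at hx
      nlinarith [abs_nonneg β, hx]
    · -- σ > 0
      set a : ℝ := ((1 - 2 * ε) * α - 1) * (σ / Real.sqrt ε) with hadef
      have ha : 0 < a := by positivity
      have hsub : {x : EuclideanSpace ℝ (Fin d) | |⟪x - μF, u⟫| < t}
          ⊆ {x | a ≤ |⟪x - μW, u⟫|} := by
        intro x hx
        simp only [Set.mem_setOf_eq] at hx ⊢
        have htri : (1 - ε) * |β| - |⟪x - μF, u⟫| ≤ |⟪x - μW, u⟫| := by
          have := abs_sub_abs_le_abs_sub ((1 - ε) * β) (-(⟪x - μW, u⟫ - (1 - ε) * β))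
          rw [abs_neg] at this
          have h1 : |(1 - ε) * β| = (1 - ε) * |β| := by
            rw [abs_mul, abs_of_pos (by linarith : (0:ℝ) < 1 - ε)]
          have h2 : (1 - ε) * β - -(⟪x - μW, u⟫ - (1 - ε) * β) = ⟪x - μW, u⟫ := by ring
          rw [h1, h2] at this
          rw [hidW x]
          linarith
        have hβbig : α * σ / Real.sqrt ε ≤ |β| := hcorr'
        rw [ht] at hx
        have key : (1 - 2 * ε) * |β| - σ / Real.sqrt ε ≤ |⟪x - μW, u⟫| := by
          nlinarith [htri, hx]
        have : a ≤ (1 - 2 * ε) * |β| - σ / Real.sqrt ε := by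
          rw [hadef]
          have : (1 - 2 * ε) * (α * σ / Real.sqrt ε) ≤ (1 - 2 * ε) * |β| :=
            mul_le_mul_of_nonneg_left hβbig h2ε.le
          have hrw : (1 - 2 * ε) * (α * σ / Real.sqrt ε)
              = (1 - 2 * ε) * α * (σ / Real.sqrt ε) := by ring
          nlinarith [this]
        linarith
      have := cheb_aux W hfW ha (hWcov u hu)
      refine le_trans (measure_mono hsub) (le_trans this (le_of_eq ?_))
      congr 1
      rw [hadef]
      field_simp
      ring
      exact hse2
end

section
/- Let 0 < ε < 1/2 and σ ≥ 0. Let D and W be Borel probability measures on ℝ^d with finite second moments, means μ_D and μ_W, and suppose that for every unit vector u one has E_{X∼D}[⟨X−μ_D,u⟩²] ≤ σ² and E_{X∼W}[⟨X−μ_W,u⟩²] ≤ σ². Let Δ = μ_D − μ_W, let F = (1−ε)D + εW with mean μ_F and covariance matrix Σ_F = E_{X∼F}[(X−μ_F)(X−μ_F)ᵀ], and let v be a unit vector attaining vᵀΣ_F v = max_{‖u‖₂=1} uᵀΣ_F u. If ‖Δ‖₂² ≥ 6σ²/ε, then ⟨v,Δ⟩² ≥ 2σ²/ε. -/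
open MeasureTheory RealInnerProductSpace

set_option maxHeartbeats 1000000

variable {α : Type*} [MeasurableSpace α] {μ : Measure α}

lemma mulInt {f g : α → ℝ} (hf : MemLp f 2 μ) (hg : MemLp g 2 μ) :
    Integrable (fun x => f x * g x) μ := by
  have h := (((hf.add hg).integrable_sq.sub hf.integrable_sq).sub hg.integrable_sq).div_const 2
  refine h.congr (Filter.Eventually.of_forall fun x => ?_)
  simp only [Pi.add_apply, Pi.sub_apply]
  ring

lemma innerMem {d : ℕ} {μ : Measure (EuclideanSpace ℝ (Fin d))} [IsFiniteMeasure μ]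
    (h2 : MemLp (id : EuclideanSpace ℝ (Fin d) → EuclideanSpace ℝ (Fin d)) 2 μ)
    (c u : EuclideanSpace ℝ (Fin d)) :
    MemLp (fun x : EuclideanSpace ℝ (Fin d) => ⟪x - c, u⟫) 2 μ := by
  have hXm : MemLp (fun x : EuclideanSpace ℝ (Fin d) => x - c) 2 μ :=
    h2.sub (memLp_const c)
  have he : (fun x : EuclideanSpace ℝ (Fin d) => ⟪x - c, u⟫)
      = (⇑(innerSL ℝ u) ∘ fun x : EuclideanSpace ℝ (Fin d) => x - c) := by
    funext x
    simp only [Function.comp_apply, innerSL_apply_apply]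
    exact real_inner_comm _ _
  rw [he]
  exact (innerSL ℝ u).comp_memLp' hXm

lemma coordMem {d : ℕ} {μ : Measure (EuclideanSpace ℝ (Fin d))} [IsFiniteMeasure μ]
    (h2 : MemLp (id : EuclideanSpace ℝ (Fin d) → EuclideanSpace ℝ (Fin d)) 2 μ)
    (c : EuclideanSpace ℝ (Fin d)) (i : Fin d) :
    MemLp (fun x : EuclideanSpace ℝ (Fin d) => x i - c i) 2 μ := by
  have h1 : MemLp (fun x : EuclideanSpace ℝ (Fin d) => x i) 2 μ := by
    have := (EuclideanSpace.proj (𝕜 := ℝ) i).comp_memLp' h2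
    exact this
  exact h1.sub (memLp_const (c i))

lemma meanZero {d : ℕ} {μ : Measure (EuclideanSpace ℝ (Fin d))} [IsProbabilityMeasure μ]
    (h2 : MemLp (id : EuclideanSpace ℝ (Fin d) → EuclideanSpace ℝ (Fin d)) 2 μ)
    (u : EuclideanSpace ℝ (Fin d)) :
    ∫ x, ⟪x - (∫ y, y ∂μ), u⟫ ∂μ = 0 := by
  have hid : Integrable (fun x : EuclideanSpace ℝ (Fin d) => x) μ := h2.integrable one_le_two
  have hXm : Integrable (fun x : EuclideanSpace ℝ (Fin d) => x - (∫ y, y ∂μ)) μ :=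
    hid.sub (integrable_const _)
  have := (innerSL ℝ u).integral_comp_comm hXm
  have he : ∀ x : EuclideanSpace ℝ (Fin d), ⟪x - (∫ y, y ∂μ), u⟫
      = (innerSL ℝ u) (x - (∫ y, y ∂μ)) := fun x => real_inner_comm _ _
  simp_rw [he]
  rw [this, integral_sub hid (integrable_const _), integral_const]
  simp

lemma expandShift {d : ℕ} {μ : Measure (EuclideanSpace ℝ (Fin d))} [IsProbabilityMeasure μ]
    (h2 : MemLp (id : EuclideanSpace ℝ (Fin d) → EuclideanSpace ℝ (Fin d)) 2 μ)
    (m c u : EuclideanSpace ℝ (Fin d)) (hm : m = ∫ y, y ∂μ) :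
    ∫ x, ⟪x - c, u⟫ ^ 2 ∂μ = (∫ x, ⟪x - m, u⟫ ^ 2 ∂μ) + ⟪m - c, u⟫ ^ 2 := by
  have hf : MemLp (fun x : EuclideanSpace ℝ (Fin d) => ⟪x - m, u⟫) 2 μ := innerMem h2 m u
  have hfi : Integrable (fun x : EuclideanSpace ℝ (Fin d) => ⟪x - m, u⟫) μ :=
    hf.integrable one_le_two
  have hmean : ∫ x, ⟪x - m, u⟫ ∂μ = 0 := by rw [hm]; exact meanZero h2 u
  have key : ∀ x : EuclideanSpace ℝ (Fin d),
      ⟪x - c, u⟫ ^ 2 = ⟪x - m, u⟫ ^ 2 + (2 * ⟪m - c, u⟫) * ⟪x - m, u⟫ + ⟪m - c, u⟫ ^ 2 := by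
    intro x
    have : ⟪x - c, u⟫ = ⟪x - m, u⟫ + ⟪m - c, u⟫ := by
      rw [← inner_add_left]; congr 1; abel
    rw [this]; ring
  have keyf : (fun x : EuclideanSpace ℝ (Fin d) => ⟪x - c, u⟫ ^ 2)
      = fun x => ⟪x - m, u⟫ ^ 2 + (2 * ⟪m - c, u⟫) * ⟪x - m, u⟫ + ⟪m - c, u⟫ ^ 2 := funext key
  rw [keyf]
  have h1 : Integrable (fun x : EuclideanSpace ℝ (Fin d) =>
      ⟪x - m, u⟫ ^ 2 + (2 * ⟪m - c, u⟫) * ⟪x - m, u⟫) μ :=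
    hf.integrable_sq.add (hfi.const_mul _)
  have h2' : Integrable (fun x : EuclideanSpace ℝ (Fin d) =>
      (2 * ⟪m - c, u⟫) * ⟪x - m, u⟫) μ := hfi.const_mul _
  rw [integral_add h1 (integrable_const _), integral_add hf.integrable_sq h2',
    integral_const_mul, hmean, integral_const]
  simp

/-- **Lemma 3.** If `‖Δ‖² ≥ 6σ²/ε`, then any top unit eigenvector `v` of the covariance
matrix of the mixture `F = (1−ε)D + εW` satisfies `⟨v,Δ⟩² ≥ 2σ²/ε`. -/
theorem top_eigenvector_correlation {d : ℕ} (ε σ : ℝ)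
    (hε : 0 < ε) (hε2 : ε < 1 / 2) (hσ : 0 ≤ σ)
    (D W : Measure (EuclideanSpace ℝ (Fin d)))
    [IsProbabilityMeasure D] [IsProbabilityMeasure W]
    (hD2 : MemLp (id : EuclideanSpace ℝ (Fin d) → EuclideanSpace ℝ (Fin d)) 2 D)
    (hW2 : MemLp (id : EuclideanSpace ℝ (Fin d) → EuclideanSpace ℝ (Fin d)) 2 W)
    (μD μW : EuclideanSpace ℝ (Fin d))
    (hμD : μD = (∫ x, x ∂D)) (hμW : μW = (∫ x, x ∂W))
    (hDcov : ∀ u : EuclideanSpace ℝ (Fin d), ‖u‖ = 1 →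
      ∫ x, ⟪x - μD, u⟫ ^ 2 ∂D ≤ σ ^ 2)
    (hWcov : ∀ u : EuclideanSpace ℝ (Fin d), ‖u‖ = 1 →
      ∫ x, ⟪x - μW, u⟫ ^ 2 ∂W ≤ σ ^ 2)
    (Δ : EuclideanSpace ℝ (Fin d)) (hΔ : Δ = μD - μW)
    (F : Measure (EuclideanSpace ℝ (Fin d)))
    (hF : F = ENNReal.ofReal (1 - ε) • D + ENNReal.ofReal ε • W)
    (μF : EuclideanSpace ℝ (Fin d)) (hμF : μF = (1 - ε) • μD + ε • μW)
    (SigmaF : Matrix (Fin d) (Fin d) ℝ)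
    (hSigmaF : SigmaF = Matrix.of fun i j => ∫ x, (x i - μF i) * (x j - μF j) ∂F)
    (v : EuclideanSpace ℝ (Fin d)) (hv : ‖v‖ = 1)
    (hvmax : ∀ u : EuclideanSpace ℝ (Fin d), ‖u‖ = 1 →
      ∑ i, ∑ j, u i * SigmaF i j * u j ≤ ∑ i, ∑ j, v i * SigmaF i j * v j)
    (hsep : ‖Δ‖ ^ 2 ≥ 6 * σ ^ 2 / ε) :
    ⟪v, Δ⟫ ^ 2 ≥ 2 * σ ^ 2 / ε := by
  have hε0 : (0:ℝ) ≤ ε := hε.le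
  have hε1 : (0:ℝ) ≤ 1 - ε := by linarith
  -- integrability of coordinate products
  have hpD : ∀ i j, Integrable
      (fun x : EuclideanSpace ℝ (Fin d) => (x i - μF i) * (x j - μF j)) D :=
    fun i j => mulInt (coordMem hD2 μF i) (coordMem hD2 μF j)
  have hpW : ∀ i j, Integrable
      (fun x : EuclideanSpace ℝ (Fin d) => (x i - μF i) * (x j - μF j)) W :=
    fun i j => mulInt (coordMem hW2 μF i) (coordMem hW2 μF j)
  have hpF : ∀ i j, Integrable
      (fun x : EuclideanSpace ℝ (Fin d) => (x i - μF i) * (x j - μF j)) F := by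
    intro i j
    rw [hF]
    exact ((hpD i j).smul_measure ENNReal.ofReal_ne_top).add_measure
      ((hpW i j).smul_measure ENNReal.ofReal_ne_top)
  -- quadratic form equals integral of squared inner product
  have hQ : ∀ u : EuclideanSpace ℝ (Fin d),
      ∑ i, ∑ j, u i * SigmaF i j * u j = ∫ x, ⟪x - μF, u⟫ ^ 2 ∂F := by
    intro u
    have step1 : ∑ i, ∑ j, u i * SigmaF i j * u j
        = ∑ i, ∑ j, ∫ x, (u i * u j) * ((x i - μF i) * (x j - μF j)) ∂F := by
      refine Finset.sum_congr rfl fun i _ => Finset.sum_congr rfl fun j _ => ?_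
      rw [hSigmaF]
      simp only [Matrix.of_apply]
      rw [← integral_const_mul, ← integral_mul_const]
      exact integral_congr_ae (Filter.Eventually.of_forall fun x => by ring)
    rw [step1]
    have e1 : ∫ x, ∑ i, ∑ j, (u i * u j) * ((x i - μF i) * (x j - μF j)) ∂F
        = ∑ i, ∫ x, ∑ j, (u i * u j) * ((x i - μF i) * (x j - μF j)) ∂F :=
      integral_finset_sum _ fun i _ =>
        integrable_finset_sum _ fun j _ => (hpF i j).const_mul _
    have e2 : ∀ i : Fin d, ∫ x, ∑ j, (u i * u j) * ((x i - μF i) * (x j - μF j)) ∂F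
        = ∑ j, ∫ x, (u i * u j) * ((x i - μF i) * (x j - μF j)) ∂F := fun i =>
      integral_finset_sum _ fun j _ => (hpF i j).const_mul _
    have step2 : ∑ i, ∑ j, (∫ x, (u i * u j) * ((x i - μF i) * (x j - μF j)) ∂F)
        = ∫ x, ∑ i, ∑ j, (u i * u j) * ((x i - μF i) * (x j - μF j)) ∂F := by
      rw [e1]
      exact (Finset.sum_congr rfl fun i _ => (e2 i)).symm
    rw [step2]
    congr 1
    funext x
    have hin : ⟪x - μF, u⟫ = ∑ i, (x i - μF i) * u i := by
      rw [PiLp.inner_apply]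
      refine Finset.sum_congr rfl fun i _ => ?_
      simp [PiLp.sub_apply]
      ring
    rw [hin, sq, Finset.sum_mul_sum]
    refine Finset.sum_congr rfl fun i _ => Finset.sum_congr rfl fun j _ => ?_
    ring
  -- split integral over F
  have hsplit : ∀ u : EuclideanSpace ℝ (Fin d),
      ∫ x, ⟪x - μF, u⟫ ^ 2 ∂F
        = (1 - ε) * ∫ x, ⟪x - μF, u⟫ ^ 2 ∂D + ε * ∫ x, ⟪x - μF, u⟫ ^ 2 ∂W := by
    intro u
    rw [hF, integral_add_measure
        (((innerMem hD2 μF u).integrable_sq).smul_measure ENNReal.ofReal_ne_top)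
        (((innerMem hW2 μF u).integrable_sq).smul_measure ENNReal.ofReal_ne_top),
      integral_smul_measure, integral_smul_measure,
      ENNReal.toReal_ofReal hε1, ENNReal.toReal_ofReal hε0]
    simp only [smul_eq_mul]
  -- expand over each component
  have hμDF : μD - μF = ε • Δ := by
    rw [hμF, hΔ]; module
  have hμWF : μW - μF = (ε - 1) • Δ := by
    rw [hμF, hΔ]; module
  have hexpD : ∀ u : EuclideanSpace ℝ (Fin d),
      ∫ x, ⟪x - μF, u⟫ ^ 2 ∂D = (∫ x, ⟪x - μD, u⟫ ^ 2 ∂D) + ε ^ 2 * ⟪Δ, u⟫ ^ 2 := by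
    intro u
    rw [expandShift hD2 μD μF u hμD, hμDF, real_inner_smul_left]
    ring
  have hexpW : ∀ u : EuclideanSpace ℝ (Fin d),
      ∫ x, ⟪x - μF, u⟫ ^ 2 ∂W = (∫ x, ⟪x - μW, u⟫ ^ 2 ∂W) + (1 - ε) ^ 2 * ⟪Δ, u⟫ ^ 2 := by
    intro u
    rw [expandShift hW2 μW μF u hμW, hμWF, real_inner_smul_left]
    ring
  -- final formula for quadratic form
  have hQF : ∀ u : EuclideanSpace ℝ (Fin d),
      ∑ i, ∑ j, u i * SigmaF i j * u j
        = (1 - ε) * (∫ x, ⟪x - μD, u⟫ ^ 2 ∂D) + ε * (∫ x, ⟪x - μW, u⟫ ^ 2 ∂W)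
          + (ε * (1 - ε)) * ⟪Δ, u⟫ ^ 2 := by
    intro u
    rw [hQ u, hsplit u, hexpD u, hexpW u]
    ring
  -- deal with trivial case
  by_cases hΔ0 : Δ = 0
  · have hd : 6 * σ ^ 2 / ε ≤ 0 := by
      have : (0:ℝ) ≥ 6 * σ ^ 2 / ε := by simpa [hΔ0] using hsep
      linarith
    have h6 : 6 * σ ^ 2 ≤ 0 := by
      have hc : 6 * σ ^ 2 = (6 * σ ^ 2 / ε) * ε := by field_simp
      rw [hc]
      exact mul_nonpos_of_nonpos_of_nonneg hd hε0
    have hz : ⟪v, Δ⟫ = 0 := by simp [hΔ0]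
    rw [ge_iff_le, hz]
    have hle : 2 * σ ^ 2 / ε ≤ 0 := div_nonpos_of_nonpos_of_nonneg (by linarith) hε0
    simpa using hle
  -- main case
  have hΔn : (0:ℝ) < ‖Δ‖ := norm_pos_iff.mpr hΔ0
  set u₀ : EuclideanSpace ℝ (Fin d) := ‖Δ‖⁻¹ • Δ with hu₀def
  have hu₀ : ‖u₀‖ = 1 := by
    rw [hu₀def, norm_smul, norm_inv, norm_norm, inv_mul_cancel₀ hΔn.ne']
  have hinner₀ : ⟪Δ, u₀⟫ = ‖Δ‖ := by
    rw [hu₀def, real_inner_smul_right, real_inner_self_eq_norm_sq, sq, ← mul_assoc,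
      inv_mul_cancel₀ hΔn.ne', one_mul]
  have hVD : (0:ℝ) ≤ ∫ x, ⟪x - μD, u₀⟫ ^ 2 ∂D := integral_nonneg fun x => sq_nonneg _
  have hVW : (0:ℝ) ≤ ∫ x, ⟪x - μW, u₀⟫ ^ 2 ∂W := integral_nonneg fun x => sq_nonneg _
  have hlow : (ε * (1 - ε)) * ‖Δ‖ ^ 2 ≤ ∑ i, ∑ j, v i * SigmaF i j * v j := by
    refine le_trans ?_ (hvmax u₀ hu₀)
    rw [hQF u₀, hinner₀]
    nlinarith
  have hup : ∑ i, ∑ j, v i * SigmaF i j * v j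
      ≤ σ ^ 2 + (ε * (1 - ε)) * ⟪Δ, v⟫ ^ 2 := by
    rw [hQF v]
    nlinarith [hDcov v hv, hWcov v hv]
  have hsep' : 6 * σ ^ 2 ≤ ε * ‖Δ‖ ^ 2 := by
    rw [ge_iff_le, div_le_iff₀ hε] at hsep
    linarith
  have hvd : ⟪v, Δ⟫ = ⟪Δ, v⟫ := real_inner_comm _ _
  rw [ge_iff_le, div_le_iff₀ hε, hvd]
  nlinarith [sq_nonneg ⟪Δ, v⟫, sq_nonneg σ, sq_nonneg ‖Δ‖,
    mul_nonneg (mul_nonneg hε0 hε1) (sq_nonneg ⟪Δ, v⟫),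
    mul_nonneg hε0 (sq_nonneg ⟪Δ, v⟫)]
end

section
/- Let 0 ≤ ε ≤ 1. Let D and W be Borel probability measures on ℝ^d with finite second moments and means μ_D and μ_W, let Δ = μ_D − μ_W, and let Σ_F be the covariance matrix of the mixture F = (1−ε)D + εW. Then the largest eigenvalue of Σ_F is at least ε(1−ε)‖Δ‖₂²; equivalently, max_{‖u‖₂=1} uᵀΣ_F u ≥ ε(1−ε)‖Δ‖₂². -/
open MeasureTheory RealInnerProductSpace

set_option maxHeartbeats 1000000

/-- The spectral signature: the largest eigenvalue of the mixture covariance `ΣF`,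
i.e. the maximal Rayleigh quotient `max_{‖u‖=1} uᵀΣF u`, is at least `ε(1−ε)‖Δ‖²`. -/
theorem mixture_covariance_top_eigenvalue_lower_bound {d : ℕ} (ε : ℝ)
    (hε0 : 0 ≤ ε) (hε1 : ε ≤ 1)
    (D W : Measure (EuclideanSpace ℝ (Fin d)))
    [IsProbabilityMeasure D] [IsProbabilityMeasure W]
    (hD2 : MemLp (id : EuclideanSpace ℝ (Fin d) → EuclideanSpace ℝ (Fin d)) 2 D)
    (hW2 : MemLp (id : EuclideanSpace ℝ (Fin d) → EuclideanSpace ℝ (Fin d)) 2 W)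
    (μD μW : EuclideanSpace ℝ (Fin d))
    (hμD : μD = (∫ x, x ∂D)) (hμW : μW = (∫ x, x ∂W))
    (Δ : EuclideanSpace ℝ (Fin d)) (hΔ : Δ = μD - μW)
    (F : Measure (EuclideanSpace ℝ (Fin d)))
    (hF : F = ENNReal.ofReal (1 - ε) • D + ENNReal.ofReal ε • W)
    (μF : EuclideanSpace ℝ (Fin d)) (hμF : μF = (1 - ε) • μD + ε • μW)
    (SigmaF : Matrix (Fin d) (Fin d) ℝ)
    (hSigmaF : SigmaF = Matrix.of fun i j => ∫ x, (x i - μF i) * (x j - μF j) ∂F) :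
    ε * (1 - ε) * ‖Δ‖ ^ 2 ≤
      sSup {r : ℝ | ∃ u : EuclideanSpace ℝ (Fin d),
        ‖u‖ = 1 ∧ r = ∑ i, ∑ j, u i * SigmaF i j * u j} := by
  classical
  have hεD : (ENNReal.ofReal (1 - ε)) ≠ ⊤ := ENNReal.ofReal_ne_top
  have hεW : (ENNReal.ofReal ε) ≠ ⊤ := ENNReal.ofReal_ne_top
  have hF2 : MemLp (id : EuclideanSpace ℝ (Fin d) → EuclideanSpace ℝ (Fin d)) 2 F := by
    rw [memLp_two_iff_integrable_sq_norm aestronglyMeasurable_id, hF, integrable_add_measure]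
    exact ⟨((memLp_two_iff_integrable_sq_norm hD2.1).mp hD2).smul_measure hεD,
      ((memLp_two_iff_integrable_sq_norm hW2.1).mp hW2).smul_measure hεW⟩
  have hFP : IsFiniteMeasure F := by
    constructor
    rw [hF]
    simp only [Measure.add_apply, Measure.smul_apply, measure_univ, smul_eq_mul, mul_one]
    exact ENNReal.add_lt_top.mpr ⟨ENNReal.ofReal_lt_top, ENNReal.ofReal_lt_top⟩
  have key : ∀ u : EuclideanSpace ℝ (Fin d), ‖u‖ = 1 →
      ε * (1 - ε) * ⟪u, Δ⟫ ^ 2 ≤ ∑ i, ∑ j, u i * SigmaF i j * u j := by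
    intro u _
    set g : EuclideanSpace ℝ (Fin d) → ℝ := fun x => ⟪u, x - μF⟫ with hg
    have hgmem : ∀ (ν : Measure (EuclideanSpace ℝ (Fin d))) [IsFiniteMeasure ν],
        MemLp (id : EuclideanSpace ℝ (Fin d) → EuclideanSpace ℝ (Fin d)) 2 ν →
        MemLp g 2 ν := by
      intro ν _ hν
      have := (hν.sub (memLp_const μF)).const_inner (𝕜 := ℝ) u
      simpa [hg, Pi.sub_apply] using this
    have hcoord : ∀ i : Fin d,
        MemLp (fun x : EuclideanSpace ℝ (Fin d) => x i - μF i) 2 F := by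
      intro i
      have h1 := (EuclideanSpace.proj (𝕜 := ℝ) i).comp_memLp' (hF2.sub (memLp_const μF))
      exact h1
    have hprod : ∀ i j : Fin d,
        Integrable (fun x : EuclideanSpace ℝ (Fin d) => (x i - μF i) * (x j - μF j)) F := by
      intro i j
      have h2 : (1 : ENNReal) / 1 = 1 / 2 + 1 / 2 := by norm_num [ENNReal.inv_two_add_inv_two]
      have h3 := (hcoord j).smul (r := 1) (hcoord i)
      rw [memLp_one_iff_integrable] at h3
      exact h3
    have hA : ∑ i, ∑ j, u i * SigmaF i j * u j = ∫ x, g x ^ 2 ∂F := by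
      have h1 : ∀ i j : Fin d, u i * SigmaF i j * u j
          = ∫ x, u i * ((x i - μF i) * (x j - μF j)) * u j ∂F := by
        intro i j
        rw [hSigmaF]
        simp only [Matrix.of_apply]
        rw [integral_mul_const, integral_const_mul]
      calc ∑ i, ∑ j, u i * SigmaF i j * u j
          = ∑ i, ∑ j, ∫ x, u i * ((x i - μF i) * (x j - μF j)) * u j ∂F :=
            Finset.sum_congr rfl fun i _ => Finset.sum_congr rfl fun j _ => h1 i j
        _ = ∫ x, ∑ i, ∑ j, u i * ((x i - μF i) * (x j - μF j)) * u j ∂F := by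
            rw [integral_finset_sum _ (fun i _ =>
              integrable_finset_sum _ fun j _ => ((hprod i j).const_mul _).mul_const _)]
            exact Finset.sum_congr rfl fun i _ =>
              (integral_finset_sum _ fun j _ => ((hprod i j).const_mul _).mul_const _).symm
        _ = ∫ x, g x ^ 2 ∂F := by
            congr 1
            funext x
            have hgx : g x = ∑ i, u i * (x i - μF i) := by
              simp [hg, PiLp.inner_apply, RCLike.inner_apply, conj_trivial]
              exact Finset.sum_congr rfl fun i _ => mul_comm _ _
            rw [hgx, sq, Finset.sum_mul_sum]
            exact Finset.sum_congr rfl fun i _ => Finset.sum_congr rfl fun j _ => by ring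
    have hsplit : ∫ x, g x ^ 2 ∂F
        = (1 - ε) * ∫ x, g x ^ 2 ∂D + ε * ∫ x, g x ^ 2 ∂W := by
      rw [hF, integral_add_measure (((hgmem D hD2).integrable_sq).smul_measure hεD)
        (((hgmem W hW2).integrable_sq).smul_measure hεW),
        integral_smul_measure, integral_smul_measure,
        ENNReal.toReal_ofReal (by linarith : (0:ℝ) ≤ 1 - ε), ENNReal.toReal_ofReal hε0]
      simp [smul_eq_mul]
    have hmean : ∀ (ν : Measure (EuclideanSpace ℝ (Fin d))) [IsProbabilityMeasure ν],
        MemLp (id : EuclideanSpace ℝ (Fin d) → EuclideanSpace ℝ (Fin d)) 2 ν →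
        ∫ x, g x ∂ν = ⟪u, (∫ x, x ∂ν) - μF⟫ := by
      intro ν _ hν
      have hid : Integrable (fun x : EuclideanSpace ℝ (Fin d) => x) ν :=
        hν.integrable one_le_two
      have hint : Integrable (fun x : EuclideanSpace ℝ (Fin d) => x - μF) ν :=
        hid.sub (integrable_const μF)
      calc ∫ x, g x ∂ν = ⟪u, ∫ x, (x - μF) ∂ν⟫ := integral_inner hint u
        _ = ⟪u, (∫ x, x ∂ν) - μF⟫ := by
            rw [integral_sub hid (integrable_const μF), integral_const]
            simp
    have hvar : ∀ (ν : Measure (EuclideanSpace ℝ (Fin d))) [IsProbabilityMeasure ν],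
        MemLp g 2 ν → (∫ x, g x ∂ν) ^ 2 ≤ ∫ x, g x ^ 2 ∂ν := by
      intro ν _ hg2
      have h := ProbabilityTheory.variance_nonneg g ν
      rw [ProbabilityTheory.variance_eq_sub hg2] at h
      simp only [Pi.pow_apply] at h
      linarith
    have hDF : (∫ x, x ∂D) - μF = ε • Δ := by
      rw [← hμD, hμF, hΔ]; module
    have hWF : (∫ x, x ∂W) - μF = (-(1 - ε)) • Δ := by
      rw [← hμW, hμF, hΔ]; module
    have hmD : ∫ x, g x ∂D = ε * ⟪u, Δ⟫ := by
      rw [hmean D hD2, hDF, real_inner_smul_right]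
    have hmW : ∫ x, g x ∂W = -(1 - ε) * ⟪u, Δ⟫ := by
      rw [hmean W hW2, hWF, real_inner_smul_right]
    have h1 := hvar D (hgmem D hD2)
    have h2 := hvar W (hgmem W hW2)
    rw [hmD] at h1
    rw [hmW] at h2
    rw [hA, hsplit]
    nlinarith [mul_le_mul_of_nonneg_left h1 (by linarith : (0:ℝ) ≤ 1 - ε),
      mul_le_mul_of_nonneg_left h2 hε0, sq_nonneg (⟪u, Δ⟫ : ℝ)]
  set S := {r : ℝ | ∃ u : EuclideanSpace ℝ (Fin d),
    ‖u‖ = 1 ∧ r = ∑ i, ∑ j, u i * SigmaF i j * u j} with hS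
  have hbdd : BddAbove S := by
    refine ⟨∑ i, ∑ j, |SigmaF i j|, ?_⟩
    rintro r ⟨u, hu, rfl⟩
    have hui : ∀ i, |u i| ≤ 1 := by
      intro i
      have h := abs_real_inner_le_norm (EuclideanSpace.single i (1:ℝ)) u
      rw [EuclideanSpace.norm_single] at h
      simpa [EuclideanSpace.inner_single_left, hu] using h
    refine Finset.sum_le_sum fun i _ => Finset.sum_le_sum fun j _ => ?_
    calc u i * SigmaF i j * u j ≤ |u i * SigmaF i j * u j| := le_abs_self _
      _ = |u i| * |SigmaF i j| * |u j| := by rw [abs_mul, abs_mul]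
      _ ≤ 1 * |SigmaF i j| * 1 :=
          mul_le_mul (mul_le_mul_of_nonneg_right (hui i) (abs_nonneg _)) (hui j)
            (abs_nonneg _) (by positivity)
      _ = |SigmaF i j| := by ring
  rcases eq_or_ne Δ 0 with h0 | h0
  · have hΔ0 : ‖Δ‖ = 0 := by rw [h0]; simp
    rw [hΔ0]
    rcases Set.eq_empty_or_nonempty S with hSe | ⟨r, hr⟩
    · rw [hSe, Real.sSup_empty]
      simp
    · obtain ⟨u, hu, hru⟩ := hr
      have hk := key u hu
      have hle := le_csSup hbdd (show r ∈ S from ⟨u, hu, hru⟩)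
      rw [h0] at hk
      simp only [inner_zero_right] at hk
      have : (0:ℝ) ≤ r := by rw [hru]; nlinarith [hk]
      nlinarith [hle]
  · set u : EuclideanSpace ℝ (Fin d) := ‖Δ‖⁻¹ • Δ with hu_def
    have hΔn : ‖Δ‖ ≠ 0 := norm_ne_zero_iff.mpr h0
    have hu : ‖u‖ = 1 := by
      rw [hu_def, norm_smul, norm_inv, norm_norm, inv_mul_cancel₀ hΔn]
    have hk := key u hu
    have hle := le_csSup hbdd (show (∑ i, ∑ j, u i * SigmaF i j * u j) ∈ S from ⟨u, hu, rfl⟩)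
    have h3 : ⟪u, Δ⟫ = ‖Δ‖ := by
      rw [hu_def, real_inner_smul_left, real_inner_self_eq_norm_sq]
      field_simp
    rw [h3] at hk
    linarith
end

section
/- Let 0 < ε < 1 and σ ≥ 0. Let D and W be Borel probability measures on ℝ^d with finite second moments, means μ_D and μ_W, and suppose that for every unit vector u one has E_{X∼D}[⟨X−μ_D,u⟩²] ≤ σ² and E_{X∼W}[⟨X−μ_W,u⟩²] ≤ σ². Let Δ = μ_D − μ_W, let Σ_F be the covariance matrix of the mixture F = (1−ε)D + εW, and let v be a unit vector attaining vᵀΣ_F v = max_{‖u‖₂=1} uᵀΣ_F u. Then ⟨v,Δ⟩² ≥ ‖Δ‖₂² − σ²/(ε(1−ε)). -/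
open MeasureTheory RealInnerProductSpace

variable {d : ℕ}

local notation "E" => EuclideanSpace ℝ (Fin d)

lemma mul_int {α : Type*} [MeasurableSpace α] {μ : Measure α} {f g : α → ℝ}
    (hf : MemLp f 2 μ) (hg : MemLp g 2 μ) : Integrable (fun x => f x * g x) μ := by
  refine Integrable.mono' ((hf.integrable_sq.add hg.integrable_sq).div_const 2)
    (hf.aestronglyMeasurable.mul hg.aestronglyMeasurable) ?_
  filter_upwards with x
  have : (|f x| - |g x|) ^ 2 ≥ 0 := sq_nonneg _
  rw [Real.norm_eq_abs, abs_mul]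
  simp only [Pi.add_apply]
  nlinarith [abs_nonneg (f x), abs_nonneg (g x), sq_abs (f x), sq_abs (g x)]

lemma memL2_inner (μ : Measure E) [IsFiniteMeasure μ]
    (h2 : MemLp (id : E → E) 2 μ) (c w : E) :
    MemLp (fun x : E => ⟪x - c, w⟫) 2 μ := by
  have : (fun x : E => ⟪x - c, w⟫) = fun x : E => ⟪(id x : E), w⟫ - ⟪c, w⟫ := by
    funext x; rw [← inner_sub_left]; rfl
  rw [this]
  exact (h2.inner_const w).sub (memLp_const _)

lemma coordL2 (μ : Measure E) [IsFiniteMeasure μ]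
    (h2 : MemLp (id : E → E) 2 μ) (c : E) (i : Fin d) :
    MemLp (fun x : E => x i - c i) 2 μ := by
  have h := memL2_inner μ h2 c (EuclideanSpace.single i (1:ℝ))
  have : (fun x : E => ⟪x - c, EuclideanSpace.single i (1:ℝ)⟫) =
      fun x : E => x i - c i := by
    funext x
    rw [EuclideanSpace.inner_single_right]
    simp
  rwa [this] at h

lemma quad_eq (μ : Measure E) [IsProbabilityMeasure μ]
    (h2 : MemLp (id : E → E) 2 μ) (c u : E) :
    ∑ i, ∑ j, u i * (∫ x, (x i - c i) * (x j - c j) ∂μ) * u j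
      = ∫ x, ⟪x - c, u⟫ ^ 2 ∂μ := by
  have hint : ∀ i j : Fin d, Integrable (fun x : E => (x i - c i) * (x j - c j)) μ :=
    fun i j => mul_int (coordL2 μ h2 c i) (coordL2 μ h2 c j)
  have step1 : ∀ i j : Fin d, u i * (∫ x, (x i - c i) * (x j - c j) ∂μ) * u j
      = ∫ x, u i * ((x i - c i) * (x j - c j)) * u j ∂μ := by
    intro i j
    rw [show (fun x : E => u i * ((x i - c i) * (x j - c j)) * u j)
        = fun x : E => (u i * ((x i - c i) * (x j - c j))) * u j from rfl,
      integral_mul_const, integral_const_mul]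
  calc ∑ i, ∑ j, u i * (∫ x, (x i - c i) * (x j - c j) ∂μ) * u j
      = ∑ i, ∑ j, ∫ x, u i * ((x i - c i) * (x j - c j)) * u j ∂μ := by
        exact Finset.sum_congr rfl fun i _ => Finset.sum_congr rfl fun j _ => step1 i j
    _ = ∑ i : Fin d, ∫ x, ∑ j, u i * ((x i - c i) * (x j - c j)) * u j ∂μ := by
        refine Finset.sum_congr rfl fun i _ => ?_
        rw [integral_finset_sum]
        exact fun j _ => ((hint i j).const_mul _).mul_const _
    _ = ∫ x, ∑ i, ∑ j, u i * ((x i - c i) * (x j - c j)) * u j ∂μ := by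
        rw [integral_finset_sum]
        intro i _
        exact integrable_finset_sum _ fun j _ => ((hint i j).const_mul _).mul_const _
    _ = ∫ x, ⟪x - c, u⟫ ^ 2 ∂μ := by
        refine integral_congr_ae (Filter.Eventually.of_forall fun x => ?_)
        have hin : ⟪x - c, u⟫ = ∑ i, (x i - c i) * u i := by
          simp [PiLp.inner_apply, RCLike.inner_apply]
          exact Finset.sum_congr rfl fun i _ => mul_comm _ _
        show _ = ⟪x - c, u⟫ ^ 2
        rw [hin, sq, Finset.sum_mul_sum]
        exact Finset.sum_congr rfl fun i _ => Finset.sum_congr rfl fun j _ => by ring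

lemma shift_eq (μ : Measure E) [IsProbabilityMeasure μ]
    (h2 : MemLp (id : E → E) 2 μ) (m w u : E) (hm : m = ∫ x, x ∂μ) :
    ∫ x, ⟪x - (m + w), u⟫ ^ 2 ∂μ = (∫ x, ⟪x - m, u⟫ ^ 2 ∂μ) + ⟪w, u⟫ ^ 2 := by
  have hf2 : MemLp (fun x : E => ⟪x - m, u⟫) 2 μ := memL2_inner μ h2 m u
  have hf1 : Integrable (fun x : E => ⟪x - m, u⟫) μ := hf2.integrable one_le_two
  have hid : Integrable (id : E → E) μ := h2.integrable one_le_two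
  have hxu : Integrable (fun x : E => ⟪u, (x : E)⟫) μ := hid.const_inner u
  have hmean : ∫ x, ⟪x - m, u⟫ ∂μ = 0 := by
    have h1 : (fun x : E => ⟪x - m, u⟫) = fun x : E => ⟪u, (x : E)⟫ - ⟪u, m⟫ := by
      funext x
      rw [inner_sub_left, real_inner_comm x u, real_inner_comm m u]
    rw [h1, integral_sub hxu (integrable_const _), integral_const]
    have : ∫ a : E, ⟪u, (a : E)⟫ ∂μ = ⟪u, ∫ x, x ∂μ⟫ := integral_inner hid u
    rw [this, ← hm]
    simp
  have hpt : (fun x : E => ⟪x - (m + w), u⟫ ^ 2)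
      = fun x : E => ⟪x - m, u⟫ ^ 2 - (2 * ⟪w, u⟫) * ⟪x - m, u⟫ + ⟪w, u⟫ ^ 2 := by
    funext x
    have : x - (m + w) = (x - m) - w := by abel
    rw [this, inner_sub_left]
    ring
  rw [hpt, integral_add _ (integrable_const _), integral_sub hf2.integrable_sq
    (hf1.const_mul _), integral_const_mul, hmean]
  · simp
  · exact hf2.integrable_sq.sub (hf1.const_mul _)

/-- Quantitative correlation of the top eigenvector of the mixture covariance with the mean
shift: `⟨v,Δ⟩² ≥ ‖Δ‖² − σ²/(ε(1−ε))`. -/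
theorem top_eigenvector_correlation_quantitative {d : ℕ} (ε σ : ℝ)
    (hε0 : 0 < ε) (hε1 : ε < 1) (hσ : 0 ≤ σ)
    (D W : Measure (EuclideanSpace ℝ (Fin d)))
    [IsProbabilityMeasure D] [IsProbabilityMeasure W]
    (hD2 : MemLp (id : EuclideanSpace ℝ (Fin d) → EuclideanSpace ℝ (Fin d)) 2 D)
    (hW2 : MemLp (id : EuclideanSpace ℝ (Fin d) → EuclideanSpace ℝ (Fin d)) 2 W)
    (μD μW : EuclideanSpace ℝ (Fin d))
    (hμD : μD = (∫ x, x ∂D)) (hμW : μW = (∫ x, x ∂W))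
    (hDcov : ∀ u : EuclideanSpace ℝ (Fin d), ‖u‖ = 1 →
      ∫ x, ⟪x - μD, u⟫ ^ 2 ∂D ≤ σ ^ 2)
    (hWcov : ∀ u : EuclideanSpace ℝ (Fin d), ‖u‖ = 1 →
      ∫ x, ⟪x - μW, u⟫ ^ 2 ∂W ≤ σ ^ 2)
    (Δ : EuclideanSpace ℝ (Fin d)) (hΔ : Δ = μD - μW)
    (F : Measure (EuclideanSpace ℝ (Fin d)))
    (hF : F = ENNReal.ofReal (1 - ε) • D + ENNReal.ofReal ε • W)
    (μF : EuclideanSpace ℝ (Fin d)) (hμF : μF = (1 - ε) • μD + ε • μW)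
    (SigmaF : Matrix (Fin d) (Fin d) ℝ)
    (hSigmaF : SigmaF = Matrix.of fun i j => ∫ x, (x i - μF i) * (x j - μF j) ∂F)
    (v : EuclideanSpace ℝ (Fin d)) (hv : ‖v‖ = 1)
    (hvmax : ∀ u : EuclideanSpace ℝ (Fin d), ‖u‖ = 1 →
      ∑ i, ∑ j, u i * SigmaF i j * u j ≤ ∑ i, ∑ j, v i * SigmaF i j * v j) :
    ⟪v, Δ⟫ ^ 2 ≥ ‖Δ‖ ^ 2 - σ ^ 2 / (ε * (1 - ε)) := by
  have hε1' : (0:ℝ) < 1 - ε := by linarith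
  -- coordinate integrands are integrable under D and W
  have hintD : ∀ i j : Fin d, Integrable (fun x : EuclideanSpace ℝ (Fin d) => (x i - μF i) * (x j - μF j)) D :=
    fun i j => mul_int (coordL2 D hD2 μF i) (coordL2 D hD2 μF j)
  have hintW : ∀ i j : Fin d, Integrable (fun x : EuclideanSpace ℝ (Fin d) => (x i - μF i) * (x j - μF j)) W :=
    fun i j => mul_int (coordL2 W hW2 μF i) (coordL2 W hW2 μF j)
  -- splitting the F-integral
  have hsplit : ∀ i j : Fin d, SigmaF i j
      = (1 - ε) * (∫ x, (x i - μF i) * (x j - μF j) ∂D)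
        + ε * (∫ x, (x i - μF i) * (x j - μF j) ∂W) := by
    intro i j
    rw [hSigmaF]
    show ∫ x, (x i - μF i) * (x j - μF j) ∂F = _
    rw [hF, integral_add_measure ((hintD i j).smul_measure ENNReal.ofReal_ne_top)
      ((hintW i j).smul_measure ENNReal.ofReal_ne_top),
      integral_smul_measure, integral_smul_measure,
      ENNReal.toReal_ofReal hε1'.le, ENNReal.toReal_ofReal hε0.le]
    simp [smul_eq_mul]
  -- the shifted means
  have hmFD : μF = μD + (-ε) • Δ := by
    rw [hμF, hΔ]; module
  have hmFW : μF = μW + (1 - ε) • Δ := by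
    rw [hμF, hΔ]; module
  -- the quadratic form
  have hQ : ∀ u : EuclideanSpace ℝ (Fin d),
      ∑ i, ∑ j, u i * SigmaF i j * u j
        = (1 - ε) * (∫ x, ⟪x - μD, u⟫ ^ 2 ∂D) + ε * (∫ x, ⟪x - μW, u⟫ ^ 2 ∂W)
          + ε * (1 - ε) * ⟪Δ, u⟫ ^ 2 := by
    intro u
    have h1 : ∑ i, ∑ j, u i * SigmaF i j * u j
        = (1 - ε) * (∑ i, ∑ j, u i * (∫ x, (x i - μF i) * (x j - μF j) ∂D) * u j)
          + ε * (∑ i, ∑ j, u i * (∫ x, (x i - μF i) * (x j - μF j) ∂W) * u j) := by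
      simp_rw [Finset.mul_sum, ← Finset.sum_add_distrib]
      refine Finset.sum_congr rfl fun i _ => Finset.sum_congr rfl fun j _ => ?_
      rw [hsplit i j]; ring
    rw [h1, quad_eq D hD2 μF u, quad_eq W hW2 μF u]
    have h2 : ∫ x, ⟪x - μF, u⟫ ^ 2 ∂D = (∫ x, ⟪x - μD, u⟫ ^ 2 ∂D) + ε ^ 2 * ⟪Δ, u⟫ ^ 2 := by
      rw [hmFD, shift_eq D hD2 μD ((-ε) • Δ) u hμD, real_inner_smul_left]
      ring
    have h3 : ∫ x, ⟪x - μF, u⟫ ^ 2 ∂W = (∫ x, ⟪x - μW, u⟫ ^ 2 ∂W) + (1 - ε) ^ 2 * ⟪Δ, u⟫ ^ 2 := by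
      rw [hmFW, shift_eq W hW2 μW ((1 - ε) • Δ) u hμW, real_inner_smul_left]
      ring
    rw [h2, h3]; ring
  -- upper and lower bounds for unit vectors
  have hupper : ∀ u : EuclideanSpace ℝ (Fin d), ‖u‖ = 1 →
      ∑ i, ∑ j, u i * SigmaF i j * u j ≤ σ ^ 2 + ε * (1 - ε) * ⟪Δ, u⟫ ^ 2 := by
    intro u hu
    rw [hQ u]
    have := hDcov u hu
    have := hWcov u hu
    nlinarith [sq_nonneg σ]
  have hlower : ∀ u : EuclideanSpace ℝ (Fin d), ‖u‖ = 1 →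
      ε * (1 - ε) * ⟪Δ, u⟫ ^ 2 ≤ ∑ i, ∑ j, u i * SigmaF i j * u j := by
    intro u hu
    rw [hQ u]
    have h1 : 0 ≤ ∫ x, ⟪x - μD, u⟫ ^ 2 ∂D := integral_nonneg fun x => sq_nonneg _
    have h2 : 0 ≤ ∫ x, ⟪x - μW, u⟫ ^ 2 ∂W := integral_nonneg fun x => sq_nonneg _
    nlinarith
  -- conclude
  by_cases hΔ0 : Δ = 0
  · have : σ ^ 2 / (ε * (1 - ε)) ≥ 0 := by positivity
    rw [hΔ0]
    simp only [norm_zero]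
    nlinarith [sq_nonneg (⟪v, (0 : EuclideanSpace ℝ (Fin d))⟫ : ℝ)]
  · set u₀ : EuclideanSpace ℝ (Fin d) := ‖Δ‖⁻¹ • Δ with hu₀
    have hΔn : (0:ℝ) < ‖Δ‖ := norm_pos_iff.mpr hΔ0
    have hu₀n : ‖u₀‖ = 1 := by
      rw [hu₀, norm_smul, norm_inv, norm_norm, inv_mul_cancel₀ hΔn.ne']
    have hiu₀ : ⟪Δ, u₀⟫ = ‖Δ‖ := by
      rw [hu₀, real_inner_smul_right, real_inner_self_eq_norm_sq]
      field_simp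
    have key : ε * (1 - ε) * ‖Δ‖ ^ 2 ≤ σ ^ 2 + ε * (1 - ε) * ⟪Δ, v⟫ ^ 2 := by
      calc ε * (1 - ε) * ‖Δ‖ ^ 2 = ε * (1 - ε) * ⟪Δ, u₀⟫ ^ 2 := by rw [hiu₀]
        _ ≤ ∑ i, ∑ j, u₀ i * SigmaF i j * u₀ j := hlower u₀ hu₀n
        _ ≤ ∑ i, ∑ j, v i * SigmaF i j * v j := hvmax u₀ hu₀n
        _ ≤ σ ^ 2 + ε * (1 - ε) * ⟪Δ, v⟫ ^ 2 := hupper v hv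
    have hc : (0:ℝ) < ε * (1 - ε) := by positivity
    have h2 : ‖Δ‖ ^ 2 - ⟪Δ, v⟫ ^ 2 ≤ σ ^ 2 / (ε * (1 - ε)) := by
      rw [le_div_iff₀ hc]
      nlinarith [key]
    have h3 : ⟪v, Δ⟫ = ⟪Δ, v⟫ := real_inner_comm Δ v
    rw [ge_iff_le, h3]
    linarith [h2]
end

section
/- Let 0 < ε < 1/2, σ > 0, and α > 0 with (1−2ε)α > 1. Let D and W be Borel probability measures on ℝ^d with finite second moments and means μ_D and μ_W, and suppose that for every unit vector u one has E_{X∼W}[⟨X−μ_W,u⟩²] ≤ σ². Let Δ = μ_D − μ_W and μ_F = (1−ε)μ_D + εμ_W. If u is a unit vector with |⟨u,Δ⟩| ≥ α·σ/√ε, then, setting t = ε|⟨Δ,u⟩| + σ/√ε, one has Pr_{X∼W}[|⟨X−μ_F,u⟩| < t] ≤ ε/((1−2ε)α − 1)². -/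
open MeasureTheory RealInnerProductSpace

/-- Poisoned-population anti-concentration bound in the proof of Lemma 2: if the unit vector
`u` satisfies `|⟨u,Δ⟩| ≥ ασ/√ε`, then with `t = ε|⟨Δ,u⟩| + σ/√ε` we have
`Pr_{X∼W}[|⟨X−μF,u⟩| < t] ≤ ε/((1−2ε)α − 1)²`. -/
theorem poisoned_population_anticoncentration {d : ℕ} (ε σ α : ℝ)
    (hε0 : 0 < ε) (hε1 : ε < 1 / 2) (hσ : 0 < σ) (hα : 0 < α)
    (hα2 : (1 - 2 * ε) * α > 1)
    (D W : Measure (EuclideanSpace ℝ (Fin d)))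
    [IsProbabilityMeasure D] [IsProbabilityMeasure W]
    (hD2 : MemLp (id : EuclideanSpace ℝ (Fin d) → EuclideanSpace ℝ (Fin d)) 2 D)
    (hW2 : MemLp (id : EuclideanSpace ℝ (Fin d) → EuclideanSpace ℝ (Fin d)) 2 W)
    (μD μW : EuclideanSpace ℝ (Fin d))
    (hμD : μD = (∫ x, x ∂D)) (hμW : μW = (∫ x, x ∂W))
    (hWcov : ∀ u : EuclideanSpace ℝ (Fin d), ‖u‖ = 1 →
      ∫ x, ⟪x - μW, u⟫ ^ 2 ∂W ≤ σ ^ 2)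
    (Δ μF : EuclideanSpace ℝ (Fin d))
    (hΔ : Δ = μD - μW) (hμF : μF = (1 - ε) • μD + ε • μW)
    (u : EuclideanSpace ℝ (Fin d)) (hu : ‖u‖ = 1)
    (hcorr : |⟪u, Δ⟫| ≥ α * σ / Real.sqrt ε)
    (t : ℝ) (ht : t = ε * |⟪Δ, u⟫| + σ / Real.sqrt ε) :
    W {x | |⟪x - μF, u⟫| < t} ≤ ENNReal.ofReal (ε / ((1 - 2 * ε) * α - 1) ^ 2) := by
  have hsqε : 0 < Real.sqrt ε := Real.sqrt_pos.mpr hε0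
  have hsqε2 : Real.sqrt ε ^ 2 = ε := Real.sq_sqrt hε0.le
  have h2ε : 0 < 1 - 2 * ε := by linarith
  have hΔu : |⟪Δ, u⟫| ≥ α * σ / Real.sqrt ε := by
    rwa [real_inner_comm] at hcorr
  set s : ℝ := (1 - 2 * ε) * |⟪Δ, u⟫| - σ / Real.sqrt ε with hs
  have hsb : s ≥ ((1 - 2 * ε) * α - 1) * (σ / Real.sqrt ε) := by
    have : (1 - 2 * ε) * |⟪Δ, u⟫| ≥ (1 - 2 * ε) * (α * σ / Real.sqrt ε) := by
      exact mul_le_mul_of_nonneg_left hΔu h2ε.le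
    have h1 : (1 - 2 * ε) * (α * σ / Real.sqrt ε)
        = (1 - 2 * ε) * α * (σ / Real.sqrt ε) := by ring
    rw [hs]; nlinarith [div_pos hσ hsqε]
  have hc1 : (0:ℝ) < (1 - 2 * ε) * α - 1 := by linarith
  have hspos : 0 < s := lt_of_lt_of_le (by positivity) hsb
  -- key decomposition: μF - μW = (1-ε) • Δ
  have hkey : ∀ x : EuclideanSpace ℝ (Fin d),
      ⟪x - μF, u⟫ = ⟪x - μW, u⟫ - (1 - ε) * ⟪Δ, u⟫ := by
    intro x
    have : x - μF = (x - μW) - (1 - ε) • Δ := by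
      rw [hμF, hΔ]
      module
    rw [this, inner_sub_left, inner_smul_left]
    simp
  -- set inclusion
  have hsub : {x : EuclideanSpace ℝ (Fin d) | |⟪x - μF, u⟫| < t}
      ⊆ {x | s ^ 2 ≤ ⟪x - μW, u⟫ ^ 2} := by
    intro x hx
    simp only [Set.mem_setOf_eq] at hx ⊢
    have hk := hkey x
    have habs : (1 - ε) * |⟪Δ, u⟫| ≤ |⟪x - μW, u⟫| + |⟪x - μF, u⟫| := by
      have : (1 - ε) * ⟪Δ, u⟫ = ⟪x - μW, u⟫ - ⟪x - μF, u⟫ := by linarith [hk]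
      calc (1 - ε) * |⟪Δ, u⟫| = |(1 - ε) * ⟪Δ, u⟫| := by
            rw [abs_mul, abs_of_nonneg (by linarith : (0:ℝ) ≤ 1 - ε)]
        _ = |⟪x - μW, u⟫ - ⟪x - μF, u⟫| := by rw [this]
        _ ≤ |⟪x - μW, u⟫| + |⟪x - μF, u⟫| := abs_sub _ _
    have hlt : s < |⟪x - μW, u⟫| := by
      rw [hs]; rw [ht] at hx; linarith
    calc s ^ 2 ≤ |⟪x - μW, u⟫| ^ 2 := by nlinarith
      _ = ⟪x - μW, u⟫ ^ 2 := sq_abs _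
  -- integrability
  have hmem : MemLp (fun x => ⟪x - μW, u⟫) 2 W := by
    exact ((hW2.sub (memLp_const μW)).inner_const u)
  have hint : Integrable (fun x => ⟪x - μW, u⟫ ^ 2) W := by
    simpa [sq] using hmem.integrable_sq
  -- Markov
  have hmarkov := mul_meas_ge_le_integral_of_nonneg
    (ae_of_all W fun x => sq_nonneg ⟪x - μW, u⟫) hint (s ^ 2)
  have hmeas_le : (W {x | s ^ 2 ≤ ⟪x - μW, u⟫ ^ 2}).toReal ≤ σ ^ 2 / s ^ 2 := by
    have h2 : s ^ 2 * (W {x | s ^ 2 ≤ ⟪x - μW, u⟫ ^ 2}).toReal ≤ σ ^ 2 :=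
      hmarkov.trans (hWcov u hu)
    rw [mul_comm] at h2
    exact (le_div_iff₀ (by positivity)).mpr h2
  have hsσ : σ ^ 2 / s ^ 2 ≤ ε / ((1 - 2 * ε) * α - 1) ^ 2 := by
    have hsb2 : s ^ 2 ≥ (((1 - 2 * ε) * α - 1)) ^ 2 * σ ^ 2 / ε := by
      have h1 : (((1 - 2 * ε) * α - 1) * (σ / Real.sqrt ε)) ^ 2
          = ((1 - 2 * ε) * α - 1) ^ 2 * σ ^ 2 / ε := by
        rw [mul_pow, div_pow, hsqε2]
        ring
      calc s ^ 2 ≥ (((1 - 2 * ε) * α - 1) * (σ / Real.sqrt ε)) ^ 2 := by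
            apply sq_le_sq' _ hsb
            linarith [hspos, mul_pos hc1 (div_pos hσ hsqε)]
        _ = ((1 - 2 * ε) * α - 1) ^ 2 * σ ^ 2 / ε := h1
    rw [div_le_div_iff₀ (by positivity) (by positivity)]
    have h3 := mul_le_mul_of_nonneg_left hsb2 hε0.le
    have h4 : ε * (((1 - 2 * ε) * α - 1) ^ 2 * σ ^ 2 / ε) = σ ^ 2 * ((1 - 2 * ε) * α - 1) ^ 2 := by
      field_simp
    rw [← h4]; exact h3
  calc W {x | |⟪x - μF, u⟫| < t} ≤ W {x | s ^ 2 ≤ ⟪x - μW, u⟫ ^ 2} :=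
        measure_mono hsub
    _ = ENNReal.ofReal ((W {x | s ^ 2 ≤ ⟪x - μW, u⟫ ^ 2}).toReal) := by
        rw [ENNReal.ofReal_toReal (measure_ne_top W _)]
    _ ≤ ENNReal.ofReal (σ ^ 2 / s ^ 2) := ENNReal.ofReal_le_ofReal hmeas_le
    _ ≤ ENNReal.ofReal (ε / ((1 - 2 * ε) * α - 1) ^ 2) := ENNReal.ofReal_le_ofReal hsσ
end
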